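/- arXiv:0909.4267 — 5 statements merged into one kernel-verified Lean document; each statement's English description precedes it below -/
import Mathlib

section
/- Let γ ∈ ℝ, r(0) ∈ ℝ, and let σ be a positive Borel measure on ℝ with ∫_ℝ dσ(u)/(u²+1) < ∞, and suppose r(t) = r(0) + iγt − ∫_ℝ g_t(u) dσ(u) for all t ∈ ℝ. Then for all t, s ∈ ℝ, K_r(t,s) = r(t) + conj(r(s)) − r(t−s) − r(0) = ∫_ℝ e_t(u) conj(e_s(u)) dσ(u), where e_t(u) = (e^{itu} − 1)/u for u ≠ 0 and e_t(0) = it. In particular, K_r is a positive kernel on ℝ. -/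
open MeasureTheory Complex
open scoped ENNReal

/-- The kernel `K_r(t,s) = r(t) + conj(r(s)) - r(t-s) - r(0)`. -/
noncomputable def Kker (r : ℝ → ℂ) (t s : ℝ) : ℂ :=
  r t + (starRingEnd ℂ) (r s) - r (t - s) - r 0

/-- Positivity of a kernel on a set `A ⊆ ℝ`. -/
def IsPosKernel (K : ℝ → ℝ → ℂ) (A : Set ℝ) : Prop :=
  ∀ (n : ℕ) (t : Fin n → ℝ), (∀ i, t i ∈ A) → ∀ c : Fin n → ℂ,
    (∑ i, ∑ j, c i * (starRingEnd ℂ) (c j) * K (t i) (t j)).im = 0 ∧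
    0 ≤ (∑ i, ∑ j, c i * (starRingEnd ℂ) (c j) * K (t i) (t j)).re

/-- `g_t(u) = (e^{itu} - 1 - itu/(u²+1))/u²` for `u ≠ 0`, `g_t(0) = -t²/2`. -/
noncomputable def gfun (t u : ℝ) : ℂ :=
  if u = 0 then -(t : ℂ) ^ 2 / 2
  else (Complex.exp (Complex.I * t * u) - 1 - Complex.I * t * u / ((u : ℂ) ^ 2 + 1)) / (u : ℂ) ^ 2

/-- `e_t(u) = (e^{itu} - 1)/u` for `u ≠ 0`, `e_t(0) = it`. -/
noncomputable def efun (t u : ℝ) : ℂ :=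
  if u = 0 then Complex.I * t else (Complex.exp (Complex.I * t * u) - 1) / (u : ℂ)

lemma efun_key (t s u : ℝ) : efun t u * (starRingEnd ℂ) (efun s u)
    = gfun (t-s) u - gfun t u - (starRingEnd ℂ) (gfun s u) := by
  by_cases hu : u = 0
  · subst hu
    simp only [efun, gfun, if_pos rfl, if_true]
    rw [map_mul, map_div₀, map_neg, map_pow, Complex.conj_I, Complex.conj_ofReal,
      map_ofNat]
    · push_cast
      linear_combination (-(t:ℂ)*s) * Complex.I_sq
  · have hu' : (u : ℂ) ≠ 0 := by exact_mod_cast hu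
    have hd : (u : ℂ) ^ 2 + 1 ≠ 0 := by
      intro h
      have : ((u^2 + 1 : ℝ) : ℂ) = 0 := by push_cast; linear_combination h
      have h2 : (u^2 + 1 : ℝ) = 0 := by exact_mod_cast this
      nlinarith
    have hb : Complex.exp (Complex.I * s * u) ≠ 0 := Complex.exp_ne_zero _
    have hconj : (starRingEnd ℂ) (Complex.exp (Complex.I * s * u))
        = (Complex.exp (Complex.I * s * u))⁻¹ := by
      rw [← Complex.exp_conj, ← Complex.exp_neg]
      congr 1
      simp only [map_mul, Complex.conj_I, Complex.conj_ofReal]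
      ring
    have hts : Complex.exp (Complex.I * (↑(t - s)) * u)
        = Complex.exp (Complex.I * t * u) * (Complex.exp (Complex.I * s * u))⁻¹ := by
      rw [← Complex.exp_neg, ← Complex.exp_add]
      congr 1
      push_cast; ring
    simp only [efun, gfun, if_neg hu, map_div₀, map_sub, map_add, map_mul, map_one, map_pow,
      Complex.conj_I, Complex.conj_ofReal, hconj, hts]
    push_cast
    generalize (Complex.exp (Complex.I * s * u))⁻¹ = c
    field_simp
    ring

lemma integrable_conj' {σ : Measure ℝ} {f : ℝ → ℂ} (h : Integrable f σ) :
    Integrable (fun x => (starRingEnd ℂ) (f x)) σ :=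
  ⟨Complex.continuous_conj.comp_aestronglyMeasurable h.1,
    by simpa [HasFiniteIntegral] using h.2⟩

/-- If `r(t) = r(0) + iγt - ∫ g_t dσ` with `∫ dσ(u)/(u²+1) < ∞`, then
`K_r(t,s) = ∫ e_t(u) conj(e_s(u)) dσ(u)`; in particular `K_r` is a positive kernel on `ℝ`. -/
theorem kernel_integral_representation (γ : ℝ) (σ : Measure ℝ)
    (hσ : (∫⁻ u : ℝ, ENNReal.ofReal (1 / (u ^ 2 + 1)) ∂σ) < ⊤)
    (r : ℝ → ℂ) (hr0 : (r 0).im = 0)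
    (hint : ∀ t : ℝ, Integrable (gfun t) σ)
    (hrep : ∀ t : ℝ, r t = r 0 + Complex.I * γ * t - ∫ u, gfun t u ∂σ) :
    (∀ t s : ℝ, Kker r t s = ∫ u, efun t u * (starRingEnd ℂ) (efun s u) ∂σ) ∧
    IsPosKernel (Kker r) Set.univ := by
  have hstar : ∀ s : ℝ, Integrable (fun u => (starRingEnd ℂ) (gfun s u)) σ :=
    fun s => integrable_conj' (hint s)
  have hEint : ∀ t s : ℝ, Integrable (fun u => efun t u * (starRingEnd ℂ) (efun s u)) σ := by
    intro t s
    refine (((hint (t-s)).sub (hint t)).sub (hstar s)).congr ?_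
    exact Filter.Eventually.of_forall fun u => (efun_key t s u).symm
  have hpart1 : ∀ t s : ℝ, Kker r t s = ∫ u, efun t u * (starRingEnd ℂ) (efun s u) ∂σ := by
    intro t s
    have hconj_r0 : (starRingEnd ℂ) (r 0) = r 0 := Complex.conj_eq_iff_im.mpr hr0
    have hcrs : (starRingEnd ℂ) (r s)
        = r 0 - Complex.I * γ * s - ∫ u, (starRingEnd ℂ) (gfun s u) ∂σ := by
      rw [hrep s, map_sub, map_add, map_mul, map_mul, Complex.conj_I, Complex.conj_ofReal,
        Complex.conj_ofReal, hconj_r0, integral_conj]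
      ring
    have hsub : Integrable (fun u => gfun (t-s) u - gfun t u) σ := (hint (t-s)).sub (hint t)
    have hsplit : ∫ u, efun t u * (starRingEnd ℂ) (efun s u) ∂σ
        = (∫ u, gfun (t-s) u ∂σ) - (∫ u, gfun t u ∂σ)
          - ∫ u, (starRingEnd ℂ) (gfun s u) ∂σ := by
      rw [integral_congr_ae (Filter.Eventually.of_forall fun u => efun_key t s u),
        integral_sub hsub (hstar s), integral_sub (hint (t-s)) (hint t)]
    rw [Kker, hrep t, hrep (t-s), hcrs, hsplit]
    push_cast
    ring
  refine ⟨hpart1, ?_⟩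
  intro n t _ c
  set f : ℝ → ℂ := fun u => ∑ i, c i * efun (t i) u with hf
  have hsum : (∑ i, ∑ j, c i * (starRingEnd ℂ) (c j) * Kker r (t i) (t j))
      = ((∫ u, Complex.normSq (f u) ∂σ : ℝ) : ℂ) := by
    have h1 : ∀ i j : Fin n, c i * (starRingEnd ℂ) (c j) * Kker r (t i) (t j)
        = ∫ u, c i * (starRingEnd ℂ) (c j) * (efun (t i) u * (starRingEnd ℂ) (efun (t j) u)) ∂σ := by
      intro i j
      rw [hpart1, integral_const_mul]
    calc (∑ i, ∑ j, c i * (starRingEnd ℂ) (c j) * Kker r (t i) (t j))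
        = ∑ i, ∑ j, ∫ u, c i * (starRingEnd ℂ) (c j)
            * (efun (t i) u * (starRingEnd ℂ) (efun (t j) u)) ∂σ := by
          exact Finset.sum_congr rfl fun i _ => Finset.sum_congr rfl fun j _ => h1 i j
      _ = ∑ i, ∫ u, ∑ j, c i * (starRingEnd ℂ) (c j)
            * (efun (t i) u * (starRingEnd ℂ) (efun (t j) u)) ∂σ := by
          refine Finset.sum_congr rfl fun i _ => ?_
          exact (integral_finset_sum _ fun j _ => ((hEint (t i) (t j)).const_mul _)).symm
      _ = ∫ u, ∑ i, ∑ j, c i * (starRingEnd ℂ) (c j)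
            * (efun (t i) u * (starRingEnd ℂ) (efun (t j) u)) ∂σ := by
          exact (integral_finset_sum _ fun i _ =>
            integrable_finset_sum _ fun j _ => ((hEint (t i) (t j)).const_mul _)).symm
      _ = ∫ u, ((Complex.normSq (f u) : ℝ) : ℂ) ∂σ := by
          refine integral_congr_ae (Filter.Eventually.of_forall fun u => ?_)
          dsimp only
          rw [← Complex.mul_conj, hf]
          simp only [map_sum, map_mul, Finset.sum_mul, Finset.mul_sum]
          rw [Finset.sum_comm]
          refine Finset.sum_congr rfl fun i _ => Finset.sum_congr rfl fun j _ => ?_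
          ring
      _ = ((∫ u, Complex.normSq (f u) ∂σ : ℝ) : ℂ) := integral_ofReal
  rw [hsum]
  constructor
  · simp
  · simp only [Complex.ofReal_re]
    exact integral_nonneg fun u => Complex.normSq_nonneg _
end

section
/- Let r : ℝ → ℂ be continuous with r(−t) = conj(r(t)) for all t ∈ ℝ, and assume the kernel K_r(t,s) = r(t) + conj(r(s)) − r(t−s) − r(0) is positive on ℝ. Then there exists a constant M > 0 such that |r(t)| ≤ M(1 + |t|³) for all t ∈ ℝ. -/
open MeasureTheory Complex

section aux
variable {r : ℝ → ℂ}

lemma conj_r_zero (hsym : ∀ t : ℝ, r (-t) = (starRingEnd ℂ) (r t)) :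
    (starRingEnd ℂ) (r 0) = r 0 := by
  have := hsym 0; rw [neg_zero] at this; exact this.symm

lemma Kker_herm (hsym : ∀ t : ℝ, r (-t) = (starRingEnd ℂ) (r t)) (t s : ℝ) :
    Kker r s t = (starRingEnd ℂ) (Kker r t s) := by
  have hts : r (s - t) = (starRingEnd ℂ) (r (t - s)) := by
    have := hsym (t - s); rwa [neg_sub] at this
  simp only [Kker, map_add, map_sub, Complex.conj_conj, conj_r_zero hsym, hts]
  ring

lemma Kker_neg (hsym : ∀ t : ℝ, r (-t) = (starRingEnd ℂ) (r t)) (x y : ℝ) :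
    Kker r x (-y) = r x + r y - r (x + y) - r 0 := by
  have : (starRingEnd ℂ) (r (-y)) = r y := by rw [hsym]; exact Complex.conj_conj _
  simp [Kker, this, sub_neg_eq_add]

lemma Kker_diag_re (t : ℝ) : (Kker r t t).re = 2 * (r t).re - 2 * (r 0).re := by
  simp [Kker]; ring

lemma one_point (hpos : IsPosKernel (Kker r) Set.univ) (t : ℝ) :
    0 ≤ (Kker r t t).re := by
  have := (hpos 1 ![t] (fun i => trivial) ![1]).2
  simpa using this

lemma two_point (hpos : IsPosKernel (Kker r) Set.univ) (t s : ℝ) (c d : ℂ) :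
    0 ≤ (c * (starRingEnd ℂ) c * Kker r t t + c * (starRingEnd ℂ) d * Kker r t s
      + d * (starRingEnd ℂ) c * Kker r s t + d * (starRingEnd ℂ) d * Kker r s s).re := by
  have := (hpos 2 ![t, s] (fun i => trivial) ![c, d]).2
  simpa [Fin.sum_univ_two, add_assoc] using this

lemma Kker_CS (hsym : ∀ t : ℝ, r (-t) = (starRingEnd ℂ) (r t))
    (hpos : IsPosKernel (Kker r) Set.univ) (t s : ℝ) :
    Complex.normSq (Kker r t s) ≤ (Kker r t t).re * (Kker r s s).re := by
  set b := Kker r t s with hb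
  set att := (Kker r t t).re
  set dss := (Kker r s s).re
  have hatt : 0 ≤ att := one_point hpos t
  have hdss : 0 ≤ dss := one_point hpos s
  have key : ∀ l : ℝ, 0 ≤ (normSq b * att) * (l * l) + (-2 * normSq b) * l + dss := by
    intro l
    have h2 := two_point hpos t s ((l : ℂ) * (starRingEnd ℂ) b) (-1)
    rw [Kker_herm hsym t s, ← hb] at h2
    have hcb : (starRingEnd ℂ) b * b = (normSq b : ℂ) := by
      rw [mul_comm]; exact Complex.mul_conj b
    have heq : ((l : ℂ) * (starRingEnd ℂ) b * (starRingEnd ℂ) ((l : ℂ) * (starRingEnd ℂ) b) * Kker r t t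
        + (l : ℂ) * (starRingEnd ℂ) b * (starRingEnd ℂ) (-1 : ℂ) * b
        + (-1 : ℂ) * (starRingEnd ℂ) ((l : ℂ) * (starRingEnd ℂ) b) * (starRingEnd ℂ) b
        + (-1 : ℂ) * (starRingEnd ℂ) (-1 : ℂ) * Kker r s s)
        = ((l * l * normSq b : ℝ) : ℂ) * Kker r t t - ((2 * l * normSq b : ℝ) : ℂ) + Kker r s s := by
      simp only [map_mul, map_neg, map_one, Complex.conj_conj, Complex.conj_ofReal]
      push_cast
      linear_combination ((l:ℂ)^2 * Kker r t t - 2 * l) * hcb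
    rw [heq] at h2
    simp only [Complex.add_re, Complex.sub_re, Complex.re_ofReal_mul, Complex.ofReal_re] at h2
    nlinarith [h2]
  have hd := discrim_le_zero key
  unfold discrim at hd
  have hnb : 0 ≤ normSq b := Complex.normSq_nonneg b
  rcases eq_or_lt_of_le hnb with h0 | h0
  · rw [← h0]; positivity
  · nlinarith [hd]

variable (hsym : ∀ t : ℝ, r (-t) = (starRingEnd ℂ) (r t))
  (hpos : IsPosKernel (Kker r) Set.univ)
include hsym hpos

lemma Kker_norm_le (x y : ℝ) :
    ‖Kker r x y‖ ≤ Real.sqrt ((Kker r x x).re) * Real.sqrt ((Kker r y y).re) := by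
  have h := Kker_CS hsym hpos x y
  have : ‖Kker r x y‖ = Real.sqrt (normSq (Kker r x y)) := by
    rw [Complex.norm_def]
  rw [this, ← Real.sqrt_mul (one_point hpos x)]
  exact Real.sqrt_le_sqrt h

omit hpos in
lemma a_even (y : ℝ) : (Kker r (-y) (-y)).re = (Kker r y y).re := by
  rw [Kker_diag_re, Kker_diag_re, hsym y]
  simp

lemma sqrt_a_subadd (x y : ℝ) :
    Real.sqrt ((Kker r (x+y) (x+y)).re)
      ≤ Real.sqrt ((Kker r x x).re) + Real.sqrt ((Kker r y y).re) := by
  have hid : (Kker r (x+y) (x+y)).re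
      = (Kker r x x).re + (Kker r y y).re - 2 * (Kker r x (-y)).re := by
    have h := Kker_neg hsym x y
    have : (Kker r x (-y)).re = (r x).re + (r y).re - (r (x+y)).re - (r 0).re := by
      rw [h]; simp
    rw [this, Kker_diag_re, Kker_diag_re, Kker_diag_re]; ring
  have hre : -(Kker r x (-y)).re ≤ Real.sqrt ((Kker r x x).re) * Real.sqrt ((Kker r y y).re) := by
    calc -(Kker r x (-y)).re ≤ ‖Kker r x (-y)‖ := by
          have h1 : |(Kker r x (-y)).re| ≤ ‖Kker r x (-y)‖ := by
            exact Complex.abs_re_le_norm _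
          linarith [neg_abs_le ((Kker r x (-y)).re)]
      _ ≤ Real.sqrt ((Kker r x x).re) * Real.sqrt ((Kker r (-y) (-y)).re) :=
          Kker_norm_le hsym hpos x (-y)
      _ = _ := by rw [a_even hsym]
  have h1 : (Kker r (x+y) (x+y)).re
      ≤ (Real.sqrt ((Kker r x x).re) + Real.sqrt ((Kker r y y).re))^2 := by
    have sx := Real.sq_sqrt (one_point hpos x)
    have sy := Real.sq_sqrt (one_point hpos y)
    nlinarith [hre]
  calc Real.sqrt ((Kker r (x+y) (x+y)).re)
      ≤ Real.sqrt ((Real.sqrt ((Kker r x x).re) + Real.sqrt ((Kker r y y).re))^2) :=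
        Real.sqrt_le_sqrt h1
    _ = _ := Real.sqrt_sq (by positivity)

lemma sqrt_a_nsmul (n : ℕ) (u : ℝ) :
    Real.sqrt ((Kker r (n*u) (n*u)).re) ≤ n * Real.sqrt ((Kker r u u).re) := by
  induction n with
  | zero => simp [Kker]
  | succ n ih =>
      have : ((n+1 : ℕ) : ℝ) * u = n*u + u := by push_cast; ring
      rw [this]
      calc Real.sqrt ((Kker r (n*u+u) (n*u+u)).re)
          ≤ Real.sqrt ((Kker r (n*u) (n*u)).re) + Real.sqrt ((Kker r u u).re) :=
            sqrt_a_subadd hsym hpos (n*u) u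
        _ ≤ n * Real.sqrt ((Kker r u u).re) + Real.sqrt ((Kker r u u).re) := by linarith
        _ = ((n+1 : ℕ) : ℝ) * Real.sqrt ((Kker r u u).re) := by push_cast; ring

lemma g_nsmul (n : ℕ) (u : ℝ) :
    ‖r (n*u) - r 0‖ ≤ n * ‖r u - r 0‖ + n^2 * (Kker r u u).re := by
  induction n with
  | zero => simp
  | succ n ih =>
      have hcast : ((n+1 : ℕ) : ℝ) * u = n*u + u := by push_cast; ring
      have hK : r ((n:ℝ)*u + u) - r 0 = (r ((n:ℝ)*u) - r 0) + (r u - r 0) - Kker r ((n:ℝ)*u) (-u) := by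
        rw [Kker_neg hsym]; ring
      have hKn : ‖Kker r ((n:ℝ)*u) (-u)‖ ≤ n * (Kker r u u).re := by
        calc ‖Kker r ((n:ℝ)*u) (-u)‖
            ≤ Real.sqrt ((Kker r ((n:ℝ)*u) ((n:ℝ)*u)).re) * Real.sqrt ((Kker r (-u) (-u)).re) :=
              Kker_norm_le hsym hpos _ _
          _ ≤ (n * Real.sqrt ((Kker r u u).re)) * Real.sqrt ((Kker r u u).re) := by
              rw [a_even hsym]
              exact mul_le_mul_of_nonneg_right (sqrt_a_nsmul hsym hpos n u) (Real.sqrt_nonneg _)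
          _ = n * (Kker r u u).re := by
              rw [mul_assoc, Real.mul_self_sqrt (one_point hpos u)]
      calc ‖r (((n+1:ℕ):ℝ)*u) - r 0‖ = ‖(r ((n:ℝ)*u) - r 0) + (r u - r 0) - Kker r ((n:ℝ)*u) (-u)‖ := by
            rw [hcast, hK]
        _ ≤ ‖r ((n:ℝ)*u) - r 0‖ + ‖r u - r 0‖ + ‖Kker r ((n:ℝ)*u) (-u)‖ := by
            exact (norm_sub_le _ _).trans (by gcongr; exact norm_add_le _ _)
        _ ≤ (n * ‖r u - r 0‖ + n^2 * (Kker r u u).re) + ‖r u - r 0‖ + n * (Kker r u u).re := by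
            linarith [hKn]
        _ ≤ ((n+1:ℕ):ℝ) * ‖r u - r 0‖ + ((n+1:ℕ):ℝ)^2 * (Kker r u u).re := by
            have h := one_point hpos u
            have hn : (0:ℝ) ≤ (n:ℝ) := Nat.cast_nonneg n
            push_cast
            nlinarith [h, hn]

end aux

/-- If `r` is continuous, hermitian, and the kernel `K_r` is positive on `ℝ`, then
`|r(t)| ≤ M (1 + |t|³)` for some `M > 0`. -/
theorem growth_bound_of_posKernel (r : ℝ → ℂ) (hcont : Continuous r)
    (hsym : ∀ t : ℝ, r (-t) = (starRingEnd ℂ) (r t))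
    (hpos : IsPosKernel (Kker r) Set.univ) :
    ∃ M > (0 : ℝ), ∀ t : ℝ, ‖r t‖ ≤ M * (1 + |t| ^ 3) := by
  obtain ⟨B, hB⟩ : ∃ B, ∀ u ∈ Set.Icc (0:ℝ) 1, ‖r u - r 0‖ ≤ B :=
    (isCompact_Icc).exists_bound_of_continuousOn ((hcont.sub continuous_const).continuousOn)
  obtain ⟨C, hC⟩ : ∃ C, ∀ u ∈ Set.Icc (0:ℝ) 1, (Kker r u u).re ≤ C := by
    have hc : ContinuousOn (fun u => (Kker r u u).re) (Set.Icc 0 1) := by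
      have heq : (fun u => (Kker r u u).re) = fun u => 2 * (r u).re - 2 * (r 0).re :=
        funext fun u => Kker_diag_re u
      rw [heq]
      exact ((continuous_const.mul (Complex.continuous_re.comp hcont)).sub
        continuous_const).continuousOn
    obtain ⟨C, hC⟩ := (isCompact_Icc).exists_bound_of_continuousOn hc
    exact ⟨C, fun u hu => (le_abs_self _).trans (by simpa using hC u hu)⟩
  have hB0 : 0 ≤ B := le_trans (norm_nonneg _) (hB 0 (by norm_num))
  have hC0 : 0 ≤ C := le_trans (one_point hpos 0) (hC 0 (by norm_num))
  set M : ℝ := ‖r 0‖ + 2*B + 4*C + 1 with hM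
  have hMpos : 0 < M := by positivity
  refine ⟨M, hMpos, ?_⟩
  have main : ∀ t : ℝ, 0 ≤ t → ‖r t‖ ≤ M * (1 + t ^ 3) := by
    intro t ht
    rcases eq_or_lt_of_le ht with h0 | h0
    · rw [← h0, hM]
      nlinarith [norm_nonneg (r 0)]
    · set n : ℕ := ⌈t⌉₊ with hn
      have hn1 : 1 ≤ n := Nat.one_le_ceil_iff.mpr h0
      have hnpos : (0:ℝ) < n := by exact_mod_cast hn1
      set u : ℝ := t / n with hu
      have hun : (n:ℝ) * u = t := by rw [hu]; field_simp
      have hu0 : 0 ≤ u := div_nonneg ht hnpos.le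
      have hu1 : u ≤ 1 := by
        rw [hu, div_le_one hnpos]
        exact Nat.le_ceil t
      have huI : u ∈ Set.Icc (0:ℝ) 1 := ⟨hu0, hu1⟩
      have hbound := g_nsmul hsym hpos n u
      rw [hun] at hbound
      clear_value n u
      have hnt : (n:ℝ) ≤ t + 1 := by
        have h := Nat.ceil_lt_add_one ht
        rw [← hn] at h
        linarith [h]
      have h1 : ‖r t‖ ≤ ‖r 0‖ + (t+1) * B + (t+1)^2 * C := by
        have h2 : ‖r t‖ ≤ ‖r 0‖ + ‖r t - r 0‖ := by
          have := norm_sub_norm_le (r t) (r 0)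
          linarith [this]
        have h3 : (n:ℝ) * ‖r u - r 0‖ ≤ (t+1) * B := by
          have := hB u huI
          have hnn : (0:ℝ) ≤ (n:ℝ) := hnpos.le
          nlinarith [norm_nonneg (r u - r 0)]
        have h4 : (n:ℝ)^2 * (Kker r u u).re ≤ (t+1)^2 * C := by
          have hCu := hC u huI
          have h5 := one_point hpos u
          have e : (n:ℝ)^2 ≤ (t+1)^2 := by nlinarith [hnpos.le, hnt]
          calc (n:ℝ)^2 * (Kker r u u).re ≤ (t+1)^2 * (Kker r u u).re :=
                mul_le_mul_of_nonneg_right e h5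
            _ ≤ (t+1)^2 * C := mul_le_mul_of_nonneg_left hCu (sq_nonneg _)
        linarith [hbound]
      have ht1 : t ≤ 1 + t^3 := by
        rcases le_or_gt t 1 with h | h
        · nlinarith [pow_nonneg ht 3]
        · nlinarith [mul_nonneg (mul_nonneg ht (by linarith : (0:ℝ) ≤ t - 1))
            (by linarith : (0:ℝ) ≤ t + 1)]
      have ht2 : t^2 ≤ 1 + t^3 := by
        rcases le_or_gt t 1 with h | h
        · nlinarith [sq_nonneg t, pow_nonneg ht 3]
        · nlinarith [mul_nonneg (sq_nonneg t) (by linarith : (0:ℝ) ≤ t - 1)]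
      have h3nn : (0:ℝ) ≤ t^3 := pow_nonneg ht 3
      have hq : (0:ℝ) ≤ 1 + t^3 := by positivity
      have e1 : t + 1 ≤ 2 * (1 + t^3) := by linarith
      have e2 : (t+1)^2 ≤ 4 * (1 + t^3) := by nlinarith
      have e3 : (t+1) * B ≤ 2 * (1 + t^3) * B := mul_le_mul_of_nonneg_right e1 hB0
      have e4 : (t+1)^2 * C ≤ 4 * (1 + t^3) * C := mul_le_mul_of_nonneg_right e2 hC0
      have hnr0 : ‖r 0‖ ≤ ‖r 0‖ * (1 + t^3) :=
        le_mul_of_one_le_right (norm_nonneg _) (by linarith [pow_nonneg ht 3])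
      rw [hM]
      have expand : (‖r 0‖ + 2*B + 4*C + 1) * (1 + t^3)
          = ‖r 0‖ * (1 + t^3) + 2 * (1 + t^3) * B + 4 * (1 + t^3) * C + (1 + t^3) := by ring
      rw [expand]
      linarith [h1, e3, e4, hnr0, hq, ht1]
  intro t
  rcases le_or_gt 0 t with h | h
  · rw [_root_.abs_of_nonneg h]; exact main t h
  · have : ‖r t‖ = ‖r (-t)‖ := by
      rw [show t = -(-t) by ring, hsym (-t)]
      simp
    rw [this, _root_.abs_of_neg h]
    exact main (-t) (by linarith)
end

section
/- Let r : ℝ → ℂ satisfy r(0) = 0 and r(−t) = conj(r(t)) for all t ∈ ℝ, and assume the kernel K_r(t,s) = r(t) + conj(r(s)) − r(t−s) − r(0) is positive on ℝ. Then for every t ∈ ℝ, |2r(t) − r(2t)| ≤ 2|Re r(t)|, and consequently |r(2t)| ≤ 4|r(t)|. -/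
open MeasureTheory Complex

/-- If `r(0) = 0`, `r` is hermitian and `K_r` is positive on `ℝ`, then
`|2r(t) - r(2t)| ≤ 2|Re r(t)|` and hence `|r(2t)| ≤ 4|r(t)|`. -/
theorem doubling_bound_of_posKernel (r : ℝ → ℂ) (hr0 : r 0 = 0)
    (hsym : ∀ t : ℝ, r (-t) = (starRingEnd ℂ) (r t))
    (hpos : IsPosKernel (Kker r) Set.univ) :
    ∀ t : ℝ, ‖2 * r t - r (2 * t)‖ ≤ 2 * |(r t).re| ∧ ‖r (2 * t)‖ ≤ 4 * ‖r t‖ := by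
  intro t
  set b : ℂ := 2 * r t - r (2 * t) with hb
  clear_value b
  have key : ‖b‖ ≤ 2 * |(r t).re| := by
    by_cases hbz : b = 0
    · simp [hbz]
    · have hnb : (0:ℝ) < ‖b‖ := norm_pos_iff.mpr hbz
      obtain ⟨_, hre⟩ := hpos 2 ![t, -t] (fun i => Set.mem_univ _)
        ![(‖b‖ : ℂ), -b]
      have h1 : r (t - -t) = r (2 * t) := by ring_nf
      have h2 : r (-t - t) = (starRingEnd ℂ) (r (2 * t)) := by
        have : -t - t = -(2 * t) := by ring
        rw [this, hsym]
      have hcb : (starRingEnd ℂ) b * b = (‖b‖ : ℂ) ^ 2 := by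
        rw [mul_comm, Complex.mul_conj']
      have hbc : b * (starRingEnd ℂ) b = (‖b‖ : ℂ) ^ 2 := Complex.mul_conj' b
      have hsum : (∑ i, ∑ j, (![(‖b‖ : ℂ), -b] i) *
          (starRingEnd ℂ) (![(‖b‖ : ℂ), -b] j) * Kker r (![t, -t] i) (![t, -t] j))
          = 2 * (‖b‖ : ℂ) ^ 2 * (r t + (starRingEnd ℂ) (r t)) - 2 * (‖b‖ : ℂ) ^ 3 := by
        simp only [Fin.sum_univ_two, Matrix.cons_val_zero, Matrix.cons_val_one,
          Matrix.head_cons, Kker, hr0, hsym, h1, h2, sub_self, sub_zero,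
          map_neg, Complex.conj_ofReal, Complex.conj_conj]
        have e1 : r t + r t - r (2 * t) = b := by rw [hb]; ring
        have e2 : (starRingEnd ℂ) (r t) + (starRingEnd ℂ) (r t) -
            (starRingEnd ℂ) (r (2 * t)) = (starRingEnd ℂ) b := by
          rw [hb, map_sub, map_mul, map_ofNat]; ring
        rw [e1, e2]
        linear_combination (-(‖b‖:ℂ)) * hcb + ((starRingEnd ℂ) (r t) + r t - (‖b‖:ℂ)) * hbc
      have hreal : r t + (starRingEnd ℂ) (r t) = ((2 * (r t).re : ℝ) : ℂ) := by
        rw [Complex.add_conj]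
      rw [hsum, hreal] at hre
      have hre' : 0 ≤ 2 * ‖b‖ ^ 2 * (2 * (r t).re) - 2 * ‖b‖ ^ 3 := by
        have : (2 * (‖b‖ : ℂ) ^ 2 * ((2 * (r t).re : ℝ) : ℂ) - 2 * (‖b‖ : ℂ) ^ 3)
            = (((2 * ‖b‖ ^ 2 * (2 * (r t).re) - 2 * ‖b‖ ^ 3 : ℝ)) : ℂ) := by
          push_cast; ring
        rw [this, Complex.ofReal_re] at hre
        exact hre
      have habs := le_abs_self (r t).re
      nlinarith [hnb, sq_nonneg ‖b‖, mul_pos hnb hnb]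
  refine ⟨key, ?_⟩
  have h1 : r (2 * t) = 2 * r t - b := by rw [hb]; ring
  have h2 : ‖r (2 * t)‖ ≤ ‖(2 : ℂ) * r t‖ + ‖b‖ := by
    rw [h1]; exact norm_sub_le _ _
  have h3 : ‖(2 : ℂ) * r t‖ = 2 * ‖r t‖ := by
    rw [norm_mul]; norm_num
  have h4 : |(r t).re| ≤ ‖r t‖ := Complex.abs_re_le_norm _
  linarith
end

section
/- Let m(u) = u⁴ e^{−2u²}, so that √(m(u)) = u² e^{−u²}. Then for every t > 0 and s ∈ ℝ, (T_m 1_{[0,t]})(s) = (1/(4√π)) ( (t−s) e^{−(t−s)²/4} + s e^{−s²/4} ); explicitly, (1/2π) ∫_ℝ e^{isu} u² e^{−u²} (e^{−itu} − 1)/(−iu) du = (1/(4√π)) ( (t−s) e^{−(t−s)²/4} + s e^{−s²/4} ). In particular T_m 1_{[0,t]} does not have support contained in [0,t]. -/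
open MeasureTheory Complex

private lemma integrable_gauss (c : ℂ) :
    Integrable (fun u : ℝ => Complex.exp (-(u:ℂ)^2 + c * u)) := by
  have := integrable_cexp_quadratic' (b := -1) (by simp) c 0
  simpa [neg_one_mul] using this

lemma integrable_mul_gauss (a : ℝ) :
    Integrable (fun u : ℝ => (u:ℂ) * Complex.exp (-(u:ℂ)^2 + (Complex.I * a) * u)) := by
  have hg : Integrable (fun u : ℝ => |u * Real.exp (-u^2)|) := by
    exact (integrable_mul_exp_neg_mul_sq (b := 1) one_pos).abs.congr
      (Filter.Eventually.of_forall fun u => by norm_num)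
  refine hg.mono' ?_ (Filter.Eventually.of_forall fun u => ?_)
  · exact (Complex.continuous_ofReal.mul (Complex.continuous_exp.comp
      (by continuity))).aestronglyMeasurable
  · rw [norm_mul, Complex.norm_exp]
    have h1 : (-(u:ℂ)^2 + (Complex.I * a) * u).re = -u^2 := by
      simp [Complex.add_re, Complex.mul_re, ← Complex.ofReal_pow]
    rw [h1]
    simp [abs_mul, Real.abs_exp, Complex.norm_real]

private lemma gauss_int (a : ℝ) :
    ∫ u : ℝ, Complex.exp (-(u:ℂ)^2 + (Complex.I * a) * u) =
      (Real.sqrt Real.pi : ℂ) * Complex.exp (-(a:ℂ)^2 / 4) := by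
  have h := integral_cexp_quadratic (b := -1) (by simp) (Complex.I * a) 0
  have hpi : ((Real.pi : ℂ) / -(-1)) ^ (1/2 : ℂ) = (Real.sqrt Real.pi : ℂ) := by
    rw [neg_neg, div_one, show (1/2 : ℂ) = ((1/2 : ℝ) : ℂ) by norm_num,
      ← Complex.ofReal_cpow Real.pi_nonneg]
    norm_num [Real.sqrt_eq_rpow]
  have harg : (0 : ℂ) - (Complex.I * a) ^ 2 / (4 * -1) = -(a:ℂ)^2 / 4 := by
    have : (Complex.I * a)^2 = -(a:ℂ)^2 := by
      rw [mul_pow, Complex.I_sq]; ring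
    rw [this]; ring
  rw [hpi, harg] at h
  rw [← h]
  congr 1
  ext u
  congr 1
  ring

private lemma gauss_deriv (c : ℂ) (u : ℝ) :
    HasDerivAt (fun u : ℝ => Complex.exp (-(u:ℂ)^2 + c * u))
      ((-2*u + c) * Complex.exp (-(u:ℂ)^2 + c * u)) u := by
  have h1 : HasDerivAt (fun z : ℂ => -z^2 + c*z) (-2*(u:ℂ) + c) (u:ℂ) := by
    have hp := (hasDerivAt_pow 2 (u:ℂ)).neg
    have hl := (hasDerivAt_id (u:ℂ)).const_mul c
    have := hp.add hl
    refine this.congr_deriv ?_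
    simp [mul_comm]
  have h2 := h1.cexp
  have h3 := h2.comp_ofReal
  convert h3 using 1
  ring

private lemma gauss_shift (a : ℝ) :
    ∫ u : ℝ, (u:ℂ) * Complex.exp (-(u:ℂ)^2 + (Complex.I * a) * u) =
      Complex.I * a / 2 * ((Real.sqrt Real.pi : ℂ) * Complex.exp (-(a:ℂ)^2 / 4)) := by
  set c : ℂ := Complex.I * a with hc
  have hf := integrable_gauss c
  have hu := integrable_mul_gauss a
  have hf' : Integrable (fun u : ℝ =>
      (-2*(u:ℂ) + c) * Complex.exp (-(u:ℂ)^2 + c * u)) := by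
    have := ((hu.const_mul (-2)).add (hf.const_mul c))
    rw [← hc] at this
    exact this.congr (Filter.Eventually.of_forall fun u => by simp only [Pi.add_apply]; ring)
  have hzero : ∫ u : ℝ, (-2*(u:ℂ) + c) * Complex.exp (-(u:ℂ)^2 + c * u) = 0 :=
    integral_eq_zero_of_hasDerivAt_of_integrable (gauss_deriv c) hf' hf
  have hsplit : ∫ u : ℝ, (-2*(u:ℂ) + c) * Complex.exp (-(u:ℂ)^2 + c * u) =
      (-2) * (∫ u : ℝ, (u:ℂ) * Complex.exp (-(u:ℂ)^2 + c * u)) +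
      c * (∫ u : ℝ, Complex.exp (-(u:ℂ)^2 + c * u)) := by
    rw [← integral_const_mul, ← integral_const_mul,
      ← integral_add (hu.const_mul (-2)) (hf.const_mul c)]
    congr 1; ext u; ring
  rw [hsplit, gauss_int a] at hzero
  linear_combination (-1/2 : ℂ) * hzero

private lemma integrand_eq (s t : ℝ) (u : ℝ) :
    Complex.exp (Complex.I * s * u) * (u : ℂ) ^ 2 * Real.exp (-u ^ 2) *
        (Complex.exp (-(Complex.I * t * u)) - 1) / (-(Complex.I * u)) =
      Complex.I * ((u:ℂ) * Complex.exp (-(u:ℂ)^2 + (Complex.I * ((s - t : ℝ) : ℂ)) * u)) -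
      Complex.I * ((u:ℂ) * Complex.exp (-(u:ℂ)^2 + (Complex.I * s) * u)) := by
  rcases eq_or_ne u 0 with h | h
  · subst h; simp
  · have hne : -(Complex.I * (u:ℂ)) ≠ 0 := by
      simp [Complex.I_ne_zero, Complex.ofReal_ne_zero.mpr h]
    have e0 : ((Real.exp (-u^2) : ℝ) : ℂ) = Complex.exp (-(u:ℂ)^2) := by
      push_cast [Complex.ofReal_exp]; norm_num
    have e1 : Complex.exp (-(u:ℂ)^2 + (Complex.I * ((s - t : ℝ) : ℂ)) * u) =
        Complex.exp (-(u:ℂ)^2) * (Complex.exp (Complex.I * s * u) *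
          Complex.exp (-(Complex.I * t * u))) := by
      rw [← Complex.exp_add, ← Complex.exp_add]; congr 1; push_cast; ring
    have e2 : Complex.exp (-(u:ℂ)^2 + (Complex.I * s) * u) =
        Complex.exp (-(u:ℂ)^2) * Complex.exp (Complex.I * s * u) := by
      rw [← Complex.exp_add, mul_assoc]
    rw [e0, e1, e2, div_eq_iff hne]
    have hIsq : (Complex.I : ℂ)^2 = -1 := Complex.I_sq
    linear_combination (Complex.exp (-(u:ℂ)^2) * Complex.exp (Complex.I * s * u) *
      (Complex.exp (-(Complex.I * t * u)) - 1) * (u:ℂ)^2) * hIsq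

/-- For `m(u) = u⁴e^{-2u²}` (so `√m(u) = u²e^{-u²}`) and `t > 0`,
`(T_m 1_{[0,t]})(s) = (1/(4√π))((t-s)e^{-(t-s)²/4} + s e^{-s²/4})`, computed as the
absolutely convergent inverse Fourier integral
`(1/2π) ∫ e^{isu} u²e^{-u²} (e^{-itu}-1)/(-iu) du`.  In particular the support of
`T_m 1_{[0,t]}` is not contained in `[0,t]`. -/
theorem Tm_indicator_gaussian_example (t : ℝ) (ht : 0 < t) :
    (∀ s : ℝ,
      (1 / (2 * (Real.pi : ℂ))) *
          ∫ u : ℝ, Complex.exp (Complex.I * s * u) * (u : ℂ) ^ 2 *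
            Real.exp (-u ^ 2) * (Complex.exp (-(Complex.I * t * u)) - 1) /
              (-(Complex.I * u)) =
        ((1 / (4 * Real.sqrt Real.pi) *
          ((t - s) * Real.exp (-(t - s) ^ 2 / 4) + s * Real.exp (-s ^ 2 / 4)) : ℝ) : ℂ)) ∧
    ¬ Function.support (fun s : ℝ =>
        1 / (4 * Real.sqrt Real.pi) *
          ((t - s) * Real.exp (-(t - s) ^ 2 / 4) + s * Real.exp (-s ^ 2 / 4)))
      ⊆ Set.Icc 0 t := by
  constructor
  · intro s
    have hI1 := (integrable_mul_gauss (s - t)).const_mul Complex.I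
    have hI2 := (integrable_mul_gauss s).const_mul Complex.I
    have hint : ∫ u : ℝ, Complex.exp (Complex.I * s * u) * (u : ℂ) ^ 2 *
              Real.exp (-u ^ 2) * (Complex.exp (-(Complex.I * t * u)) - 1) /
                (-(Complex.I * u)) =
        Complex.I * ((s - t : ℝ) : ℂ) / 2 * ((Real.sqrt Real.pi : ℂ) * Complex.exp (-(((s - t) : ℝ):ℂ)^2 / 4)) * Complex.I -
        Complex.I * (s : ℂ) / 2 * ((Real.sqrt Real.pi : ℂ) * Complex.exp (-((s : ℝ):ℂ)^2 / 4)) * Complex.I := by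
      rw [integral_congr_ae (Filter.Eventually.of_forall (integrand_eq s t)),
        integral_sub hI1 hI2, integral_const_mul, integral_const_mul, gauss_shift, gauss_shift]
      ring
    rw [hint]
    have hP2 : ((Real.sqrt Real.pi : ℝ) : ℂ) * ((Real.sqrt Real.pi : ℝ) : ℂ) = ((Real.pi : ℝ) : ℂ) := by
      rw [← Complex.ofReal_mul, Real.mul_self_sqrt Real.pi_nonneg]
    have hPne : ((Real.sqrt Real.pi : ℝ) : ℂ) ≠ 0 :=
      Complex.ofReal_ne_zero.mpr (by positivity)
    push_cast
    have eAB : Complex.exp (-((s:ℂ) - t)^2/4) = Complex.exp (-((t:ℂ) - s)^2/4) := by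
      congr 1; ring
    rw [eAB, ← hP2]
    field_simp
    ring_nf
    simp only [Complex.I_sq]
    ring
  · intro hsub
    have hPpos : (0:ℝ) < 1 / (4 * Real.sqrt Real.pi) := by positivity
    have key : ∀ s : ℝ, s < 0 →
        (t - s) * Real.exp (-(t - s) ^ 2 / 4) + s * Real.exp (-s ^ 2 / 4) = 0 := by
      intro s hs
      by_contra h
      have hmem : s ∈ Function.support (fun s : ℝ =>
          1 / (4 * Real.sqrt Real.pi) *
            ((t - s) * Real.exp (-(t - s) ^ 2 / 4) + s * Real.exp (-s ^ 2 / 4))) := by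
        simp only [Function.mem_support]
        exact mul_ne_zero (ne_of_gt hPpos) h
      have := hsub hmem
      rw [Set.mem_Icc] at this
      linarith [this.1]
    have h1 := key (-t) (by linarith)
    have h2 := key (-2*t) (by linarith)
    -- h1 : 2t e^{-t²} - t e^{-t²/4} = 0 ; h2 : 3t e^{-9t²/4} - 2t e^{-t²} = 0
    have e1 : (2:ℝ) * Real.exp (-t^2) = Real.exp (-t^2/4) := by
      have ht' : t ≠ 0 := ne_of_gt ht
      have : t * (2 * Real.exp (-t^2) - Real.exp (-t^2/4)) = 0 := by
        rw [← h1]; ring_nf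
      rcases mul_eq_zero.mp this with h | h
      · exact absurd h ht'
      · linarith
    have e2 : (3:ℝ) * Real.exp (-(9*t^2/4)) = 2 * Real.exp (-t^2) := by
      have ht' : t ≠ 0 := ne_of_gt ht
      have : t * (3 * Real.exp (-(9*t^2/4)) - 2 * Real.exp (-t^2)) = 0 := by
        rw [← h2]; ring_nf
      rcases mul_eq_zero.mp this with h | h
      · exact absurd h ht'
      · linarith
    -- derive 2 = E^3, 3 = E^8 with E = exp(t²/4)
    set E := Real.exp (t^2/4) with hE
    have hEpos : 0 < E := Real.exp_pos _
    have hexp : ∀ n : ℕ, Real.exp (n * (t^2/4)) = E ^ n := fun n => by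
      rw [← Real.exp_nat_mul]
    have h4 : Real.exp (-t^2) * E ^ 4 = 1 := by
      rw [← hexp 4, ← Real.exp_add, show -t^2 + ((4:ℕ):ℝ)*(t^2/4) = 0 by push_cast; ring,
        Real.exp_zero]
    have h9 : Real.exp (-(9*t^2/4)) * E ^ 9 = 1 := by
      rw [← hexp 9, ← Real.exp_add, show -(9*t^2/4) + ((9:ℕ):ℝ)*(t^2/4) = 0 by push_cast; ring,
        Real.exp_zero]
    have h1' : Real.exp (-t^2/4) * E = 1 := by
      rw [← Real.exp_add, show -t^2/4 + t^2/4 = 0 by ring, Real.exp_zero]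
    have key2 : (2:ℝ) = E ^ 3 := by
      linear_combination (E^4) * e1 - 2 * h4 + (E^3) * h1'
    have key3 : (3:ℝ) = E ^ 8 := by
      linear_combination (E^9) * e2 - 3 * h9 + (2*E^5) * h4 + (E^5) * key2
    have : (2:ℝ)^8 = (3:ℝ)^3 := by rw [key2, key3]; ring
    norm_num at this
end

section
/- Let m : ℝ → [0,∞) be measurable satisfying m(u) ≤ K|u|^{−b} for 0 < |u| ≤ 1 and m(u) ≤ K′ for |u| > 1, with 0 ≤ b < 1 and K, K′ > 0. Define ρ(t) = ∫_ℝ (1 − cos(tu)) m(u)/u² du for t ∈ ℝ. Then for all t ≥ 0, ρ(t) ≤ (K/(1−b)) t² + 5K′ t; in particular there exist constants C₁, C₂ > 0 with ρ(t) ≤ C₁ t² + C₂ t for all t ≥ 0. -/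
open MeasureTheory

lemma myIntegrableOn_comp_neg {f : ℝ → ℝ} {s : Set ℝ} (hf : IntegrableOn f s) :
    IntegrableOn (fun x => f (-x)) ((fun x : ℝ => -x) ⁻¹' s) := by
  have e : MeasurableEmbedding (fun x : ℝ => -x) := (Homeomorph.neg ℝ).measurableEmbedding
  have h2 : IntegrableOn f s ((volume : Measure ℝ).map (fun x : ℝ => -x)) := by
    rw [Measure.map_neg_eq_self]; exact hf
  exact e.integrableOn_map_iff.mp h2

/-- If `m(u) ≤ K|u|^{-b}` for `0 < |u| ≤ 1` (with `0 ≤ b < 1`) and `m(u) ≤ K'` for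
`|u| > 1`, then `ρ(t) = ∫ (1 - cos(tu)) m(u)/u² du` satisfies
`ρ(t) ≤ (K/(1-b)) t² + 5K' t` for `t ≥ 0`; in particular `ρ(t) ≤ C₁t² + C₂t`. -/
theorem quadratic_growth_of_re_r (m : ℝ → ℝ) (hm0 : ∀ u, 0 ≤ m u)
    (hmeas : Measurable m)
    (hint : Integrable (fun u : ℝ => m u / (u ^ 2 + 1)))
    (b K K' : ℝ) (hb0 : 0 ≤ b) (hb1 : b < 1) (hK : 0 < K) (hK' : 0 < K')
    (hm1 : ∀ u : ℝ, u ≠ 0 → |u| ≤ 1 → m u ≤ K * |u| ^ (-b))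
    (hm2 : ∀ u : ℝ, 1 < |u| → m u ≤ K') :
    (∀ t : ℝ, 0 ≤ t →
      (∫ u : ℝ, (1 - Real.cos (t * u)) * m u / u ^ 2) ≤
        K / (1 - b) * t ^ 2 + 5 * K' * t) ∧
    ∃ C₁ > (0 : ℝ), ∃ C₂ > (0 : ℝ), ∀ t : ℝ, 0 ≤ t →
      (∫ u : ℝ, (1 - Real.cos (t * u)) * m u / u ^ 2) ≤ C₁ * t ^ 2 + C₂ * t := by
  have hb' : (0:ℝ) < 1 - b := by linarith
  have key : ∀ t : ℝ, 0 ≤ t →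
      (∫ u : ℝ, (1 - Real.cos (t * u)) * m u / u ^ 2) ≤
        K / (1 - b) * t ^ 2 + 5 * K' * t := by
    intro t ht0
    rcases eq_or_lt_of_le ht0 with h0 | ht
    · simp [← h0]
    -- now 0 < t
    set a : ℝ := max 1 t⁻¹ with ha_def
    have ha1 : (1:ℝ) ≤ a := le_max_left _ _
    have ha0 : (0:ℝ) < a := lt_of_lt_of_le one_pos ha1
    have hat : t⁻¹ ≤ a := le_max_right _ _
    have hainv : a⁻¹ ≤ t := by
      rw [inv_eq_one_div, div_le_iff₀ ha0]
      have h1 : t * t⁻¹ ≤ t * a := mul_le_mul_of_nonneg_left hat ht.le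
      rwa [mul_inv_cancel₀ ht.ne'] at h1
    -- dominating functions
    set F1 : ℝ → ℝ := Set.indicator (Set.Icc (-1:ℝ) 1) (fun v => t^2/2*K*v^(-b)) with hF1
    set F3 : ℝ → ℝ := Set.indicator (Set.Ioi a) (fun v => 2*K'/v^2) with hF3
    set g1 : ℝ → ℝ := fun u => F1 |u| with hg1def
    set S2 : Set ℝ := {u : ℝ | 1 < |u| ∧ |u| ≤ t⁻¹} with hS2def
    set g2 : ℝ → ℝ := Set.indicator S2 (fun _ => K'*t^2/2) with hg2def
    set g3 : ℝ → ℝ := fun u => F3 |u| with hg3def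
    -- alternate forms of g1, g3
    have hg1eq : g1 = Set.indicator (Set.Icc (-1:ℝ) 1) (fun u => t^2/2*K*|u|^(-b)) := by
      funext u
      show F1 |u| = _
      by_cases h : |u| ≤ 1
      · rw [hF1, Set.indicator_of_mem (Set.mem_Icc.mpr ⟨by linarith [abs_nonneg u], h⟩),
          Set.indicator_of_mem (Set.mem_Icc.mpr (abs_le.mp h))]
      · rw [hF1, Set.indicator_of_notMem (fun hm => h (Set.mem_Icc.mp hm).2),
          Set.indicator_of_notMem (fun hm => h (abs_le.mpr (Set.mem_Icc.mp hm)))]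
    have hg3eq : g3 = Set.indicator {u : ℝ | a < |u|} (fun u => 2*K'/u^2) := by
      funext u
      show F3 |u| = _
      by_cases h : a < |u|
      · rw [hF3, Set.indicator_of_mem (Set.mem_Ioi.mpr h),
          Set.indicator_of_mem (show u ∈ {u : ℝ | a < |u|} from h), sq_abs]
      · rw [hF3, Set.indicator_of_notMem (fun hm => h (Set.mem_Ioi.mp hm))]
        exact (Set.indicator_of_notMem (show u ∉ {u : ℝ | a < |u|} from h) _).symm
    -- measurability of sets
    have hS2meas : MeasurableSet S2 := by
      have : S2 = abs ⁻¹' (Set.Ioc 1 t⁻¹) := rfl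
      rw [this]; exact measurable_abs measurableSet_Ioc
    have hS3meas : MeasurableSet {u : ℝ | a < |u|} := by
      have : {u : ℝ | a < |u|} = abs ⁻¹' (Set.Ioi a) := rfl
      rw [this]; exact measurable_abs measurableSet_Ioi
    -- integrability of g1
    have hI01 : IntegrableOn (fun u : ℝ => t^2/2*K*u^(-b)) (Set.Icc (0:ℝ) 1) := by
      have h := intervalIntegral.intervalIntegrable_rpow' (a := (0:ℝ)) (b := 1)
        (r := -b) (by linarith)
      rw [intervalIntegrable_iff_integrableOn_Icc_of_le zero_le_one] at h
      exact h.const_mul _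
    have hI01' : IntegrableOn (fun u : ℝ => t^2/2*K*|u|^(-b)) (Set.Icc (0:ℝ) 1) :=
      hI01.congr_fun (fun u hu => by rw [abs_of_nonneg hu.1]) measurableSet_Icc
    have hIneg : IntegrableOn (fun u : ℝ => t^2/2*K*|u|^(-b)) (Set.Icc (-1:ℝ) 0) := by
      have h := myIntegrableOn_comp_neg hI01'
      have hpre : ((fun x : ℝ => -x) ⁻¹' Set.Icc 0 1) = Set.Icc (-1:ℝ) 0 := by
        ext x
        simp only [Set.mem_preimage, Set.mem_Icc]
        constructor
        · rintro ⟨h1, h2⟩; constructor <;> linarith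
        · rintro ⟨h1, h2⟩; constructor <;> linarith
      rw [hpre] at h
      exact MeasureTheory.IntegrableOn.congr_fun h (fun u _ => by rw [abs_neg]) measurableSet_Icc
    have hg1int : Integrable g1 := by
      rw [hg1eq, integrable_indicator_iff measurableSet_Icc]
      have hu : Set.Icc (-1:ℝ) 1 = Set.Icc (-1:ℝ) 0 ∪ Set.Icc 0 1 :=
        (Set.Icc_union_Icc_eq_Icc (by norm_num) (by norm_num)).symm
      rw [hu]
      exact hIneg.union hI01'
    -- value of ∫ g1
    have hg1val : (∫ u, g1 u) = K/(1-b)*t^2 := by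
      have h1 : (∫ u, g1 u) = 2 * ∫ v in Set.Ioi (0:ℝ), F1 v := integral_comp_abs (f := F1)
      rw [h1, hF1, setIntegral_indicator measurableSet_Icc]
      have h2 : Set.Ioi (0:ℝ) ∩ Set.Icc (-1) 1 = Set.Ioc 0 1 := by
        ext x
        simp only [Set.mem_inter_iff, Set.mem_Ioi, Set.mem_Icc, Set.mem_Ioc]
        constructor
        · rintro ⟨h1, _, h3⟩; exact ⟨h1, h3⟩
        · rintro ⟨h1, h2⟩; exact ⟨h1, by linarith, h2⟩
      rw [h2, ← intervalIntegral.integral_of_le zero_le_one,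
        intervalIntegral.integral_const_mul, integral_rpow (Or.inl (by linarith))]
      rw [Real.one_rpow, Real.zero_rpow (by linarith : -b + 1 ≠ 0),
        show (-b) + 1 = 1 - b by ring]
      ring
    -- g2 : integrability and bound
    have hS2sub : S2 ⊆ Set.Icc (-t⁻¹) t⁻¹ := fun u hu => abs_le.mp hu.2
    have hS2vol : volume S2 ≤ ENNReal.ofReal (2*t⁻¹) := by
      calc volume S2 ≤ volume (Set.Icc (-t⁻¹) t⁻¹) := measure_mono hS2sub
        _ = ENNReal.ofReal (t⁻¹ - -t⁻¹) := Real.volume_Icc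
        _ = ENNReal.ofReal (2*t⁻¹) := by ring_nf
    have hg2int : Integrable g2 := by
      rw [hg2def, integrable_indicator_iff hS2meas]
      exact (integrableOn_const_iff).mpr (Or.inr (lt_of_le_of_lt hS2vol ENNReal.ofReal_lt_top))
    have hg2val : (∫ u, g2 u) ≤ K'*t := by
      rw [hg2def, integral_indicator hS2meas, setIntegral_const, smul_eq_mul, measureReal_def]
      have h1 : (volume S2).toReal ≤ 2*t⁻¹ := by
        rw [← ENNReal.toReal_ofReal (by positivity : (0:ℝ) ≤ 2*t⁻¹)]
        exact ENNReal.toReal_mono ENNReal.ofReal_ne_top hS2vol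
      have h2 : (volume S2).toReal * (K'*t^2/2) ≤ (2*t⁻¹) * (K'*t^2/2) :=
        mul_le_mul_of_nonneg_right h1 (by positivity)
      have h3 : (2*t⁻¹) * (K'*t^2/2) = K'*t := by field_simp
      linarith
    -- g3 : integrability
    have hIoi : IntegrableOn (fun u : ℝ => 2*K'/u^2) (Set.Ioi a) := by
      have h := (integrableOn_Ioi_rpow_of_lt (by norm_num : (-2:ℝ) < -1) ha0).const_mul (2*K')
      refine MeasureTheory.IntegrableOn.congr_fun h (fun u hu => ?_) measurableSet_Ioi
      have hupos : (0:ℝ) < u := ha0.trans hu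
      have hr : u ^ (-2:ℝ) = (u^2)⁻¹ := by
        rw [Real.rpow_neg hupos.le, ← Real.rpow_natCast u 2]
        norm_num
      rw [hr, div_eq_mul_inv]
    have hIio : IntegrableOn (fun u : ℝ => 2*K'/u^2) (Set.Iio (-a)) := by
      have h := myIntegrableOn_comp_neg hIoi
      have hpre : ((fun x : ℝ => -x) ⁻¹' Set.Ioi a) = Set.Iio (-a) := by
        ext x
        simp only [Set.mem_preimage, Set.mem_Ioi, Set.mem_Iio]
        constructor <;> intro h <;> linarith
      rw [hpre] at h
      exact MeasureTheory.IntegrableOn.congr_fun h (fun u _ => by rw [neg_sq]) measurableSet_Iio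
    have hg3int : Integrable g3 := by
      rw [hg3eq, integrable_indicator_iff hS3meas]
      have hu : {u : ℝ | a < |u|} = Set.Iio (-a) ∪ Set.Ioi a := by
        ext x
        simp only [Set.mem_setOf_eq, Set.mem_union, Set.mem_Iio, Set.mem_Ioi, lt_abs]
        constructor
        · rintro (h | h)
          · exact Or.inr h
          · exact Or.inl (by linarith)
        · rintro (h | h)
          · exact Or.inr (by linarith)
          · exact Or.inl h
      rw [hu]
      exact hIio.union hIoi
    -- value of ∫ g3
    have hg3val : (∫ u, g3 u) ≤ 4*K'*t := by
      have h1 : (∫ u, g3 u) = 2 * ∫ v in Set.Ioi (0:ℝ), F3 v := integral_comp_abs (f := F3)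
      rw [h1, hF3, setIntegral_indicator measurableSet_Ioi]
      have h2 : Set.Ioi (0:ℝ) ∩ Set.Ioi a = Set.Ioi a := by
        rw [Set.Ioi_inter_Ioi, max_eq_right ha0.le]
      rw [h2]
      have h3 : (∫ v in Set.Ioi a, 2*K'/v^2) = 2*K'*a⁻¹ := by
        rw [setIntegral_congr_fun measurableSet_Ioi
          (show Set.EqOn (fun v : ℝ => 2*K'/v^2) (fun v : ℝ => 2*K' * v^(-2:ℝ)) (Set.Ioi a) by
            intro u hu
            have hupos : (0:ℝ) < u := ha0.trans hu
            have hr : u ^ (-2:ℝ) = (u^2)⁻¹ := by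
              rw [Real.rpow_neg hupos.le, ← Real.rpow_natCast u 2]
              norm_num
            simp only [hr, div_eq_mul_inv])]
        rw [MeasureTheory.integral_const_mul, integral_Ioi_rpow_of_lt (by norm_num : (-2:ℝ) < -1) ha0,
          show (-2:ℝ) + 1 = -1 by norm_num, Real.rpow_neg_one]
        ring
      rw [h3]
      have h4 : 2*K'*a⁻¹ ≤ 2*K'*t := mul_le_mul_of_nonneg_left hainv (by positivity)
      linarith
    -- nonnegativity
    have hg1nn : ∀ u, 0 ≤ g1 u := by
      intro u
      show 0 ≤ F1 |u|
      exact Set.indicator_apply_nonneg fun _ =>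
        mul_nonneg (mul_nonneg (by positivity) hK.le) (Real.rpow_nonneg (abs_nonneg u) _)
    have hg2nn : ∀ u, 0 ≤ g2 u := fun u =>
      Set.indicator_apply_nonneg fun _ =>
        div_nonneg (mul_nonneg hK'.le (sq_nonneg t)) (by norm_num)
    have hg3nn : ∀ u, 0 ≤ g3 u := by
      intro u
      show 0 ≤ F3 |u|
      exact Set.indicator_apply_nonneg fun _ =>
        div_nonneg (mul_nonneg (by norm_num) hK'.le) (sq_nonneg _)
    have hcos : ∀ z : ℝ, 1 - Real.cos z ≤ z^2/2 := fun z => by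
      linarith [Real.one_sub_sq_div_two_le_cos (x := z)]
    have hcosnn : ∀ z : ℝ, 0 ≤ 1 - Real.cos z := fun z => by linarith [Real.cos_le_one z]
    -- pointwise bound
    have hpt : ∀ u : ℝ, (1 - Real.cos (t * u)) * m u / u ^ 2 ≤ g1 u + g2 u + g3 u := by
      intro u
      by_cases hu0 : u = 0
      · subst hu0
        have h0 : (1 - Real.cos (t * 0)) * m 0 / (0:ℝ) ^ 2 = 0 := by norm_num
        rw [h0]
        exact add_nonneg (add_nonneg (hg1nn 0) (hg2nn 0)) (hg3nn 0)
      · by_cases hu1 : |u| ≤ 1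
        · have hg1u : g1 u = t^2/2*K*|u|^(-b) := by
            show F1 |u| = _
            rw [hF1, Set.indicator_of_mem (Set.mem_Icc.mpr ⟨by linarith [abs_nonneg u], hu1⟩)]
          have h1 : (1 - Real.cos (t*u)) * m u ≤ ((t*u)^2/2) * (K*|u|^(-b)) :=
            mul_le_mul (hcos _) (hm1 u hu0 hu1) (hm0 u) (by positivity)
          have h2 : (1 - Real.cos (t*u)) * m u / u^2 ≤ ((t*u)^2/2) * (K*|u|^(-b)) / u^2 :=
            div_le_div_of_nonneg_right h1 (sq_nonneg u)
          have h3 : ((t*u)^2/2) * (K*|u|^(-b)) / u^2 = t^2/2*K*|u|^(-b) := by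
            field_simp
          have := hg2nn u
          have := hg3nn u
          rw [hg1u]
          linarith
        · push_neg at hu1
          by_cases hut : |u| ≤ t⁻¹
          · have hg2u : g2 u = K'*t^2/2 :=
              Set.indicator_of_mem (show u ∈ S2 from ⟨hu1, hut⟩) _
            have h1 : (1 - Real.cos (t*u)) * m u ≤ ((t*u)^2/2) * K' :=
              mul_le_mul (hcos _) (hm2 u hu1) (hm0 u) (by positivity)
            have h2 : (1 - Real.cos (t*u)) * m u / u^2 ≤ ((t*u)^2/2) * K' / u^2 :=
              div_le_div_of_nonneg_right h1 (sq_nonneg u)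
            have h3 : ((t*u)^2/2) * K' / u^2 = K'*t^2/2 := by
              field_simp
            have := hg1nn u
            have := hg3nn u
            rw [hg2u]
            linarith
          · push_neg at hut
            have hau : a < |u| := max_lt hu1 hut
            have hg3u : g3 u = 2*K'/u^2 := by
              show F3 |u| = _
              rw [hF3, Set.indicator_of_mem (Set.mem_Ioi.mpr hau), sq_abs]
            have h1 : (1 - Real.cos (t*u)) * m u ≤ 2 * K' := by
              have := Real.neg_one_le_cos (t*u)
              have := hm2 u hu1
              nlinarith [hm0 u, hcosnn (t*u)]
            have h2 : (1 - Real.cos (t*u)) * m u / u^2 ≤ 2*K' / u^2 :=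
              div_le_div_of_nonneg_right h1 (sq_nonneg u)
            have := hg1nn u
            have := hg2nn u
            rw [hg3u]
            linarith
    -- conclude
    have hfnn : ∀ u : ℝ, 0 ≤ (1 - Real.cos (t * u)) * m u / u ^ 2 := fun u =>
      div_nonneg (mul_nonneg (hcosnn _) (hm0 u)) (sq_nonneg u)
    have hmono : (∫ u : ℝ, (1 - Real.cos (t * u)) * m u / u ^ 2) ≤
        ∫ u : ℝ, (g1 u + g2 u + g3 u) :=
      integral_mono_of_nonneg (Filter.Eventually.of_forall hfnn)
        ((hg1int.add hg2int).add hg3int) (Filter.Eventually.of_forall hpt)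
    have hsum : (∫ u : ℝ, (g1 u + g2 u + g3 u)) =
        (∫ u, g1 u) + (∫ u, g2 u) + (∫ u, g3 u) := by
      have e1 : Integrable (fun u : ℝ => g1 u + g2 u) := hg1int.add hg2int
      rw [integral_add e1 hg3int, integral_add hg1int hg2int]
    rw [hsum] at hmono
    have : K/(1-b)*t^2 + K'*t + 4*K'*t = K/(1-b)*t^2 + 5*K'*t := by ring
    linarith
  exact ⟨key, K/(1-b), div_pos hK hb', 5*K', by positivity, key⟩
end
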